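/- Let b ∈ ℝ₊^G be an assignment of values to the nodes of the pyramid (G the set of grid cells over all levels), and for each cell q at level i define the mass p_q = b_q / 2^i and the surplus s_q = p_q − Σ_{r ∈ C(q)} p_r, where C(q) are the children of q. Suppose s_q ≥ 0 for all q. Let y = Σ_{q ∈ G} s_q · e_q, where e_q is an elementary unit vector supported at an arbitrary pixel inside cell q. Then y minimizes ‖b − Py'‖₁ over all y' ∈ ℝ^n; moreover the minimum value equals (2 − 2^{−log Δ})·b_r − ‖b‖₁ where r is the root cell. -/

import Mathlib

open scoped Classical BigOperators

/-- Pixels of a `2^l × 2^l` image. -/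
abbrev Pix (l : ℕ) := Fin (2^l) × Fin (2^l)

/-- Grid cells of the pyramid: a cell at level `i` has side `2^i`, and there
are `2^(l-i) × 2^(l-i)` of them. -/
abbrev Cell (l : ℕ) := Σ i : Fin (l+1), Fin (2^(l-(i:ℕ))) × Fin (2^(l-(i:ℕ)))

/-- Pixel `p` lies in cell `c`. -/
def inCell {l : ℕ} (p : Pix l) (c : Cell l) : Prop :=
  (p.1 : ℕ) / 2^(c.1 : ℕ) = (c.2.1 : ℕ) ∧ (p.2 : ℕ) / 2^(c.1 : ℕ) = (c.2.2 : ℕ)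

/-- The pyramid transform: the coordinate for a level-`i` cell `c` equals
`2^i` times the sum of `x` over the pixels of `c`. -/
noncomputable def pyr {l : ℕ} (x : Pix l → ℝ) (c : Cell l) : ℝ :=
  2^(c.1:ℕ) * ∑ p ∈ Finset.univ.filter (fun p : Pix l => inCell p c), x p

/-- `c'` is an ancestor of `c` (possibly `c` itself). -/
def isAncestor {l : ℕ} (c' c : Cell l) : Prop :=
  (c.1 : ℕ) ≤ (c'.1 : ℕ) ∧
  (c.2.1 : ℕ) / 2^((c'.1:ℕ) - (c.1:ℕ)) = (c'.2.1 : ℕ) ∧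
  (c.2.2 : ℕ) / 2^((c'.1:ℕ) - (c.1:ℕ)) = (c'.2.2 : ℕ)

/-- `S` is closed under taking ancestors, i.e. a rooted subtree of the 4-ary
cell hierarchy. -/
def AncClosed {l : ℕ} (S : Finset (Cell l)) : Prop :=
  ∀ c ∈ S, ∀ c' : Cell l, isAncestor c' c → c' ∈ S

/-- `c` is a child of `q` in the cell hierarchy. -/
def isChild {l : ℕ} (c q : Cell l) : Prop :=
  (q.1 : ℕ) = (c.1 : ℕ) + 1 ∧ (c.2.1 : ℕ) / 2 = (q.2.1 : ℕ) ∧ (c.2.2 : ℕ) / 2 = (q.2.2 : ℕ)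

/-- ℓ₁ norm of a vector indexed by a finite type. -/
noncomputable def l1 {ι : Type*} [Fintype ι] (v : ι → ℝ) : ℝ := ∑ i, |v i|

/-- Restriction of a vector to a set of coordinates. -/
noncomputable def restr {ι : Type*} (S : Finset ι) (v : ι → ℝ) : ι → ℝ :=
  fun i => if i ∈ S then v i else 0

/-- Number of nonzero coordinates. -/
noncomputable def sparsity {ι : Type*} [Fintype ι] (x : ι → ℝ) : ℕ :=
  (Finset.univ.filter fun i => x i ≠ 0).card

/-- ℓ₁ ground distance between pixels. -/
noncomputable def dist1 {l : ℕ} (p q : Pix l) : ℝ :=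
  |(p.1 : ℝ) - (q.1 : ℝ)| + |(p.2 : ℝ) - (q.2 : ℝ)|

/-- Min-cost flow distance between two nonnegative vectors of equal mass. -/
noncomputable def EMDstar {l : ℕ} (x y : Pix l → ℝ) : ℝ :=
  sInf {c | ∃ γ : Pix l → Pix l → ℝ, (∀ i j, 0 ≤ γ i j) ∧
    (∀ i, ∑ j, γ i j = x i) ∧ (∀ j, ∑ i, γ i j = y j) ∧
    c = ∑ i, ∑ j, γ i j * dist1 i j}

/-- The Earth-Mover norm of a general vector: min cost flow from positive to
negative part, with penalty `2Δ` per unit of unmatched mass. -/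
noncomputable def emdNorm {l : ℕ} (w : Pix l → ℝ) : ℝ :=
  sInf {c | ∃ x y z : Pix l → ℝ, (∀ i, 0 ≤ x i) ∧ (∀ i, 0 ≤ y i) ∧
    (∀ i, x i - y i + z i = w i) ∧ (∑ i, x i = ∑ i, y i) ∧
    c = EMDstar x y + (2 * 2^l) * l1 z}

/-- The cell at level `j` containing pixel `p`. -/
def cellOf {l : ℕ} (j : Fin (l+1)) (p : Pix l) : Cell l :=
  ⟨j, (⟨(p.1 : ℕ) / 2^(j:ℕ), by
        have hj : (j:ℕ) ≤ l := Nat.lt_succ_iff.mp j.2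
        have h : (p.1 : ℕ) < 2^(j:ℕ) * 2^(l-(j:ℕ)) := by
          rw [← pow_add, Nat.add_sub_cancel' hj]; exact p.1.2
        exact Nat.div_lt_of_lt_mul h⟩,
      ⟨(p.2 : ℕ) / 2^(j:ℕ), by
        have hj : (j:ℕ) ≤ l := Nat.lt_succ_iff.mp j.2
        have h : (p.2 : ℕ) < 2^(j:ℕ) * 2^(l-(j:ℕ)) := by
          rw [← pow_add, Nat.add_sub_cancel' hj]; exact p.2.2
        exact Nat.div_lt_of_lt_mul h⟩)⟩



/-- The surplus of cell `q` given pyramid values `b`: the mass `b_q/2^i`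
attributed to `q` minus the mass attributed to its children. -/
noncomputable def surplus {l : ℕ} (b : Cell l → ℝ) (q : Cell l) : ℝ :=
  b q / 2^(q.1:ℕ) - ∑ c ∈ Finset.univ.filter (fun c : Cell l => isChild c q), b c / 2^(c.1:ℕ)

/-- The root cell of the pyramid. -/
def rootCell (l : ℕ) : Cell l :=
  ⟨⟨l, Nat.lt_succ_self l⟩, (⟨0, Nat.pow_pos (by norm_num)⟩,
    ⟨0, Nat.pow_pos (by norm_num)⟩)⟩

section Stmt3Aux

variable {l : ℕ}

lemma cell_ext {c d : Cell l} (h1 : (c.1:ℕ) = (d.1:ℕ)) (h21 : (c.2.1:ℕ) = (d.2.1:ℕ))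
    (h22 : (c.2.2:ℕ) = (d.2.2:ℕ)) : c = d := by
  obtain ⟨⟨i, hi⟩, ⟨a, ha⟩, ⟨b, hb⟩⟩ := c
  obtain ⟨⟨i', hi'⟩, ⟨a', ha'⟩, ⟨b', hb'⟩⟩ := d
  simp only at h1 h21 h22
  subst h1; subst h21; subst h22; rfl

private lemma anc_bound (i : Fin (l+1)) (j : ℕ) (hj : j ≤ l) (a : ℕ) (ha : a < 2^(l-j)) :
    a / 2^((i:ℕ) - j) < 2^(l-(i:ℕ)) := by
  have hi : (i:ℕ) ≤ l := Nat.lt_succ_iff.mp i.2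
  apply Nat.div_lt_of_lt_mul
  calc a < 2^(l-j) := ha
    _ ≤ 2^((i:ℕ)-j) * 2^(l-(i:ℕ)) := by
      rw [← pow_add]; exact Nat.pow_le_pow_right (by norm_num) (by omega)

/-- The ancestor of `c` at level `i` (garbage if `i < c.1`). -/
def anc (i : Fin (l+1)) (c : Cell l) : Cell l :=
  ⟨i, ⟨(c.2.1:ℕ) / 2^((i:ℕ) - (c.1:ℕ)), anc_bound i c.1 (Nat.lt_succ_iff.mp c.1.2) _ c.2.1.2⟩,
      ⟨(c.2.2:ℕ) / 2^((i:ℕ) - (c.1:ℕ)), anc_bound i c.1 (Nat.lt_succ_iff.mp c.1.2) _ c.2.2.2⟩⟩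

@[simp] lemma anc_fst (i : Fin (l+1)) (c : Cell l) : (anc i c).1 = i := rfl
@[simp] lemma anc_snd1 (i : Fin (l+1)) (c : Cell l) :
    ((anc i c).2.1 : ℕ) = (c.2.1:ℕ) / 2^((i:ℕ) - (c.1:ℕ)) := rfl
@[simp] lemma anc_snd2 (i : Fin (l+1)) (c : Cell l) :
    ((anc i c).2.2 : ℕ) = (c.2.2:ℕ) / 2^((i:ℕ) - (c.1:ℕ)) := rfl

lemma isAncestor_iff_anc {q c : Cell l} (h : (c.1:ℕ) ≤ (q.1:ℕ)) :
    isAncestor q c ↔ anc q.1 c = q := by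
  constructor
  · rintro ⟨-, h1, h2⟩
    exact cell_ext rfl h1 h2
  · intro he
    refine ⟨h, ?_, ?_⟩
    · have := congrArg (fun x : Cell l => (x.2.1 : ℕ)) he
      simpa using this
    · have := congrArg (fun x : Cell l => (x.2.2 : ℕ)) he
      simpa using this

lemma isAncestor_refl (q : Cell l) : isAncestor q q := by
  refine ⟨le_refl _, ?_, ?_⟩ <;> simp

lemma isAncestor_level_le {q c : Cell l} (h : isAncestor q c) : (c.1:ℕ) ≤ (q.1:ℕ) := h.1

lemma isAncestor_eq_of_level {q c : Cell l} (h : isAncestor q c) (hl : (c.1:ℕ) = (q.1:ℕ)) :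
    c = q := by
  obtain ⟨-, h1, h2⟩ := h
  have hz : (q.1:ℕ) - (c.1:ℕ) = 0 := by omega
  rw [hz, pow_zero, Nat.div_one] at h1 h2
  exact cell_ext hl h1 h2

lemma isAncestor_root (c : Cell l) : isAncestor (rootCell l) c := by
  refine ⟨Nat.lt_succ_iff.mp c.1.2, ?_, ?_⟩ <;>
    exact Nat.div_eq_of_lt (lt_of_lt_of_le (Fin.is_lt _) (Nat.pow_le_pow_right (by norm_num) le_rfl))

lemma inCell_of_ancestor {p : Pix l} {q c : Cell l} (hpc : inCell p c) (hqc : isAncestor q c) :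
    inCell p q := by
  obtain ⟨h1, h2⟩ := hpc
  obtain ⟨hle, h3, h4⟩ := hqc
  constructor
  · rw [show (2:ℕ)^(q.1:ℕ) = 2^(c.1:ℕ) * 2^((q.1:ℕ)-(c.1:ℕ)) by rw [← pow_add]; congr 1; omega,
      ← Nat.div_div_eq_div_mul, h1, h3]
  · rw [show (2:ℕ)^(q.1:ℕ) = 2^(c.1:ℕ) * 2^((q.1:ℕ)-(c.1:ℕ)) by rw [← pow_add]; congr 1; omega,
      ← Nat.div_div_eq_div_mul, h2, h4]

end Stmt3Aux
section Stmt3Aux2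

variable {l : ℕ}

/-- The parent of a cell (itself if it is the root level). -/
def par (c : Cell l) : Cell l := anc ⟨min ((c.1:ℕ)+1) l, by omega⟩ c

lemma isChild_iff (c' c : Cell l) : isChild c' c ↔ ((c'.1:ℕ) < l ∧ par c' = c) := by
  constructor
  · rintro ⟨h0, h1, h2⟩
    have hcl : (c.1:ℕ) ≤ l := Nat.lt_succ_iff.mp c.1.2
    have hl' : (c'.1:ℕ) < l := by omega
    have hm : min ((c'.1:ℕ)+1) l - (c'.1:ℕ) = 1 := by omega
    refine ⟨hl', cell_ext ?_ ?_ ?_⟩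
    · show min ((c'.1:ℕ)+1) l = (c.1:ℕ); omega
    · show (c'.2.1:ℕ) / 2^(min ((c'.1:ℕ)+1) l - (c'.1:ℕ)) = (c.2.1:ℕ)
      rw [hm, pow_one]; exact h1
    · show (c'.2.2:ℕ) / 2^(min ((c'.1:ℕ)+1) l - (c'.1:ℕ)) = (c.2.2:ℕ)
      rw [hm, pow_one]; exact h2
  · rintro ⟨hl', he⟩
    have hm : min ((c'.1:ℕ)+1) l - (c'.1:ℕ) = 1 := by omega
    subst he
    refine ⟨?_, ?_, ?_⟩
    · show min ((c'.1:ℕ)+1) l = (c'.1:ℕ) + 1; omega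
    · show (c'.2.1:ℕ) / 2 = (c'.2.1:ℕ) / 2^(min ((c'.1:ℕ)+1) l - (c'.1:ℕ))
      rw [hm, pow_one]
    · show (c'.2.2:ℕ) / 2 = (c'.2.2:ℕ) / 2^(min ((c'.1:ℕ)+1) l - (c'.1:ℕ))
      rw [hm, pow_one]

lemma par_ancestor_iff {q c' : Cell l} (hl' : (c'.1:ℕ) < l) :
    isAncestor q (par c') ↔ (isAncestor q c' ∧ (c'.1:ℕ) < (q.1:ℕ)) := by
  have hm : min ((c'.1:ℕ)+1) l = (c'.1:ℕ) + 1 := by omega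
  have hfst : ((par c').1 : ℕ) = (c'.1:ℕ) + 1 := hm
  have h21 : ((par c').2.1 : ℕ) = (c'.2.1:ℕ) / 2 := by
    show (c'.2.1:ℕ) / 2^(min ((c'.1:ℕ)+1) l - (c'.1:ℕ)) = _
    rw [show min ((c'.1:ℕ)+1) l - (c'.1:ℕ) = 1 by omega, pow_one]
  have h22 : ((par c').2.2 : ℕ) = (c'.2.2:ℕ) / 2 := by
    show (c'.2.2:ℕ) / 2^(min ((c'.1:ℕ)+1) l - (c'.1:ℕ)) = _
    rw [show min ((c'.1:ℕ)+1) l - (c'.1:ℕ) = 1 by omega, pow_one]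
  unfold isAncestor
  rw [h21, h22, hfst]
  constructor
  · rintro ⟨hle, e1, e2⟩
    have hq : (c'.1:ℕ) < (q.1:ℕ) := by omega
    have hpow : (2:ℕ) * 2^((q.1:ℕ) - ((c'.1:ℕ)+1)) = 2^((q.1:ℕ) - (c'.1:ℕ)) := by
      rw [← pow_succ']; congr 1; omega
    rw [Nat.div_div_eq_div_mul, hpow] at e1 e2
    exact ⟨⟨by omega, e1, e2⟩, hq⟩
  · rintro ⟨⟨hle, e1, e2⟩, hq⟩
    have hpow : (2:ℕ) * 2^((q.1:ℕ) - ((c'.1:ℕ)+1)) = 2^((q.1:ℕ) - (c'.1:ℕ)) := by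
      rw [← pow_succ']; congr 1; omega
    refine ⟨by omega, ?_, ?_⟩ <;> rw [Nat.div_div_eq_div_mul, hpow] <;> assumption

end Stmt3Aux2
section Stmt3Aux3

variable {l : ℕ}

/-- Pixels group into the cells of level `i`. -/
lemma sum_pix_cells (i : Fin (l+1)) (g : Pix l → ℝ) :
    ∑ q : Fin (2^(l-(i:ℕ))) × Fin (2^(l-(i:ℕ))),
      ∑ p ∈ Finset.univ.filter (fun p : Pix l => inCell p ⟨i, q⟩), g p = ∑ p, g p := by
  have h : ∀ q : Fin (2^(l-(i:ℕ))) × Fin (2^(l-(i:ℕ))),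
      Finset.univ.filter (fun p : Pix l => inCell p ⟨i, q⟩)
        = Finset.univ.filter (fun p : Pix l => (cellOf i p).2 = q) := by
    intro q
    apply Finset.filter_congr
    intro p _
    simp only [inCell, cellOf, Prod.ext_iff, Fin.ext_iff, eq_iff_iff]
  simp_rw [h]
  convert Finset.sum_fiberwise_of_maps_to (g := fun p => (show Fin (2^(l-(i:ℕ))) × Fin (2^(l-(i:ℕ))) from (cellOf i p).2)) (fun _ _ => Finset.mem_univ _) g
  exact Iff.rfl

/-- Descendant sets of level-`i` cells partition the cells of level `≤ i`. -/
lemma sum_cells_levels_le (i : Fin (l+1)) (f : Cell l → ℝ) :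
    ∑ q : Fin (2^(l-(i:ℕ))) × Fin (2^(l-(i:ℕ))),
      ∑ c ∈ Finset.univ.filter (fun c : Cell l => isAncestor ⟨i, q⟩ c), f c
    = ∑ c ∈ Finset.univ.filter (fun c : Cell l => (c.1:ℕ) ≤ (i:ℕ)), f c := by
  have h : ∀ q : Fin (2^(l-(i:ℕ))) × Fin (2^(l-(i:ℕ))),
      Finset.univ.filter (fun c : Cell l => isAncestor ⟨i, q⟩ c)
        = (Finset.univ.filter (fun c : Cell l => (c.1:ℕ) ≤ (i:ℕ))).filter
            (fun c => (anc i c).2 = q) := by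
    intro q
    rw [Finset.filter_filter]
    apply Finset.filter_congr
    intro c _
    simp only [isAncestor, anc_snd1, anc_snd2, Prod.ext_iff, Fin.ext_iff, eq_iff_iff]
    refine and_congr_right fun _ => ⟨fun ⟨h1, h2⟩ => Prod.ext (Fin.ext h1) (Fin.ext h2), fun h => ?_⟩
    subst h; exact ⟨rfl, rfl⟩
  simp_rw [h]
  convert Finset.sum_fiberwise_of_maps_to (g := fun c => (show Fin (2^(l-(i:ℕ))) × Fin (2^(l-(i:ℕ))) from (anc i c).2)) (fun _ _ => Finset.mem_univ _) f
  exact Iff.rfl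

/-- Telescoping: the surpluses over the descendants of `q` sum to `b q / 2^i`. -/
lemma sum_desc_surplus (b : Cell l → ℝ) (q : Cell l) :
    ∑ c ∈ Finset.univ.filter (fun c : Cell l => isAncestor q c), surplus b c
      = b q / 2^(q.1:ℕ) := by
  classical
  unfold surplus
  rw [Finset.sum_sub_distrib]
  -- children double sum
  have hchild : ∀ c : Cell l,
      Finset.univ.filter (fun c' : Cell l => isChild c' c)
        = (Finset.univ.filter (fun c' : Cell l => (c'.1:ℕ) < l)).filter
            (fun c' => par c' = c) := by
    intro c
    rw [Finset.filter_filter]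
    apply Finset.filter_congr
    intro c' _
    simpa using isChild_iff c' c
  have hdouble :
      ∑ c ∈ Finset.univ.filter (fun c : Cell l => isAncestor q c),
        ∑ c' ∈ Finset.univ.filter (fun c' : Cell l => isChild c' c), b c' / 2^(c'.1:ℕ)
      = ∑ c' ∈ Finset.univ.filter
          (fun c' : Cell l => isAncestor q c' ∧ (c'.1:ℕ) < (q.1:ℕ)),
          b c' / 2^(c'.1:ℕ) := by
    simp_rw [hchild]
    rw [Finset.sum_fiberwise_eq_sum_filter]
    rw [Finset.filter_filter]
    apply Finset.sum_congr _ (fun _ _ => rfl)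
    apply Finset.filter_congr
    intro c' _
    simp only [Finset.mem_filter, Finset.mem_univ, true_and, eq_iff_iff]
    constructor
    · rintro ⟨hl', hp⟩
      exact (par_ancestor_iff hl').mp hp
    · rintro ⟨hA, hlt⟩
      have hl' : (c'.1:ℕ) < l := lt_of_lt_of_le hlt (Nat.lt_succ_iff.mp q.1.2)
      exact ⟨hl', (par_ancestor_iff hl').mpr ⟨hA, hlt⟩⟩
  rw [hdouble]
  -- split off q from the descendant set
  have hsplit : Finset.univ.filter (fun c : Cell l => isAncestor q c)
      = insert q (Finset.univ.filter
          (fun c : Cell l => isAncestor q c ∧ (c.1:ℕ) < (q.1:ℕ))) := by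
    ext c
    simp only [Finset.mem_filter, Finset.mem_univ, true_and, Finset.mem_insert]
    constructor
    · intro hA
      rcases eq_or_lt_of_le (isAncestor_level_le hA) with h | h
      · exact Or.inl (isAncestor_eq_of_level hA h)
      · exact Or.inr ⟨hA, h⟩
    · rintro (rfl | ⟨hA, -⟩)
      · exact isAncestor_refl _
      · exact hA
  have hnotmem : q ∉ Finset.univ.filter
      (fun c : Cell l => isAncestor q c ∧ (c.1:ℕ) < (q.1:ℕ)) := by
    simp
  rw [hsplit, Finset.sum_insert hnotmem]
  ring

end Stmt3Aux3
section Stmt3Aux4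

lemma scalar_lb (n : ℕ) (B : Fin (n+1) → ℝ) (p S : ℝ)
    (_hB : ∀ i, B i ≤ 2^(i:ℕ) * p) (hlast : B (Fin.last n) = 2^n * p) :
    ∑ i : Fin (n+1), (2^(i:ℕ) * p - B i) ≤ ∑ i : Fin (n+1), |B i - 2^(i:ℕ) * S| := by
  have h2pos : ∀ k : ℕ, (0:ℝ) < 2^k := fun k => by positivity
  rcases le_or_gt p S with hpS | hpS
  · apply Finset.sum_le_sum
    intro i _
    have h1 : (2:ℝ)^(i:ℕ) * p ≤ 2^(i:ℕ) * S := by nlinarith [h2pos (i:ℕ)]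
    calc 2^(i:ℕ) * p - B i ≤ 2^(i:ℕ) * S - B i := by linarith
      _ ≤ |2^(i:ℕ) * S - B i| := le_abs_self _
      _ = |B i - 2^(i:ℕ) * S| := abs_sub_comm _ _
  · rw [Fin.sum_univ_castSucc, Fin.sum_univ_castSucc]
    simp only [Fin.coe_castSucc, Fin.val_last]
    have hgeom : ∑ i : Fin n, (2:ℝ)^(i:ℕ) = 2^n - 1 := by
      rw [Fin.sum_univ_eq_sum_range (fun k => (2:ℝ)^k) n]
      rw [geom_sum_eq (by norm_num : (2:ℝ) ≠ 1) n]
      norm_num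
    have e2 : |B (Fin.last n) - 2^n * S| = 2^n * (p - S) := by
      rw [hlast, abs_of_nonneg (by nlinarith [h2pos n])]
      ring
    have e3 : ∑ i : Fin n, (2^(i:ℕ) * p - B (Fin.castSucc i))
        ≤ (∑ i : Fin n, |B (Fin.castSucc i) - 2^(i:ℕ) * S|) + (2^n - 1) * (p - S) := by
      calc ∑ i : Fin n, (2^(i:ℕ) * p - B (Fin.castSucc i))
          ≤ ∑ i : Fin n, (|B (Fin.castSucc i) - 2^(i:ℕ) * S| + 2^(i:ℕ) * (p - S)) := by
            apply Finset.sum_le_sum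
            intro i _
            have habs : (2:ℝ)^(i:ℕ) * S - B (Fin.castSucc i)
                ≤ |B (Fin.castSucc i) - 2^(i:ℕ) * S| := by
              rw [abs_sub_comm]; exact le_abs_self _
            have hr : (2:ℝ)^(i:ℕ) * (p - S) = 2^(i:ℕ) * p - 2^(i:ℕ) * S := by ring
            linarith
        _ = (∑ i : Fin n, |B (Fin.castSucc i) - 2^(i:ℕ) * S|)
            + (∑ i : Fin n, (2:ℝ)^(i:ℕ)) * (p - S) := by
            rw [Finset.sum_add_distrib, ← Finset.sum_mul]
        _ = _ := by rw [hgeom]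
    have e4 : ((2:ℝ)^n - 1) * (p - S) ≤ 2^n * (p - S) := by nlinarith [h2pos n]
    have e1 : (2:ℝ)^n * p - B (Fin.last n) = 0 := by rw [hlast]; ring
    linarith

end Stmt3Aux4
/-- Exact inversion of the pyramid transform when all surpluses are
nonnegative: placing mass `s_q` at an arbitrary pixel of each cell `q`
minimizes `‖b - Py‖₁`, and the minimum equals
`(2 - 2^{-log Δ})·b_r - ‖b‖₁`. -/
theorem stmt3 {l : ℕ} (b : Cell l → ℝ) (hb : ∀ q, 0 ≤ b q)
    (hs : ∀ q, 0 ≤ surplus b q)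
    (pick : Cell l → Pix l) (hpick : ∀ q, inCell (pick q) q)
    (y : Pix l → ℝ)
    (hy : y = fun p => ∑ q ∈ Finset.univ.filter (fun q : Cell l => pick q = p), surplus b q) :
    (∀ y' : Pix l → ℝ, l1 (fun c => b c - pyr y c) ≤ l1 (fun c => b c - pyr y' c)) ∧
    l1 (fun c => b c - pyr y c) = (2 - (2:ℝ)^(-(l:ℤ))) * b (rootCell l) - l1 b := by
  have hl2 : ∀ k : ℕ, (0:ℝ) < 2^k := fun k => by positivity
  -- total surplus equals the root mass
  have hrootD : Finset.univ.filter (fun c : Cell l => isAncestor (rootCell l) c)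
      = Finset.univ := by
    ext c; simp [isAncestor_root c]
  have hSy : ∑ c : Cell l, surplus b c = b (rootCell l) / 2^l := by
    have h := sum_desc_surplus b (rootCell l)
    rw [hrootD] at h
    exact h
  have hsumy : ∑ p : Pix l, y p = b (rootCell l) / 2^l := by
    rw [hy]
    rw [Finset.sum_fiberwise_of_maps_to (fun c _ => Finset.mem_univ (pick c)) (surplus b)]
    exact hSy
  -- per-cell lower bound for our y
  have hcell : ∀ q : Cell l, b q ≤ pyr y q := by
    intro q
    have hsub : Finset.univ.filter (fun c : Cell l => isAncestor q c)
        ⊆ Finset.univ.filter (fun c : Cell l =>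
            pick c ∈ Finset.univ.filter (fun p : Pix l => inCell p q)) := by
      intro c hc
      simp only [Finset.mem_filter, Finset.mem_univ, true_and] at hc ⊢
      exact inCell_of_ancestor (hpick c) hc
    have hfib : ∑ p ∈ Finset.univ.filter (fun p : Pix l => inCell p q), y p
        = ∑ c ∈ Finset.univ.filter (fun c : Cell l =>
            pick c ∈ Finset.univ.filter (fun p : Pix l => inCell p q)), surplus b c := by
      rw [hy]
      exact Finset.sum_fiberwise_eq_sum_filter _ _ pick (surplus b)
    have hge : b q / 2^(q.1:ℕ) ≤ ∑ p ∈ Finset.univ.filter (fun p : Pix l => inCell p q), y p := by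
      rw [hfib, ← sum_desc_surplus b q]
      exact Finset.sum_le_sum_of_subset_of_nonneg hsub (fun c _ _ => hs c)
    have h := mul_le_mul_of_nonneg_left hge (le_of_lt (hl2 (q.1:ℕ)))
    calc b q = 2^(q.1:ℕ) * (b q / 2^(q.1:ℕ)) := by field_simp
      _ ≤ _ := h
  -- level decomposition of l1
  have hl1 : ∀ v : Cell l → ℝ, l1 v
      = ∑ i : Fin (l+1), ∑ q : Fin (2^(l-(i:ℕ))) × Fin (2^(l-(i:ℕ))), |v ⟨i, q⟩| := by
    intro v
    rw [l1, ← Finset.univ_sigma_univ, Finset.sum_sigma]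
  -- pyramid level sums
  have hpyr : ∀ (x : Pix l → ℝ) (i : Fin (l+1)),
      ∑ q : Fin (2^(l-(i:ℕ))) × Fin (2^(l-(i:ℕ))), pyr x ⟨i, q⟩ = 2^(i:ℕ) * ∑ p, x p := by
    intro x i
    simp only [pyr]
    rw [← Finset.mul_sum, sum_pix_cells]
  -- level sums of b
  have hBdef : ∀ i : Fin (l+1), ∑ q : Fin (2^(l-(i:ℕ))) × Fin (2^(l-(i:ℕ))), b ⟨i,q⟩
      = 2^(i:ℕ) * ∑ c ∈ Finset.univ.filter (fun c : Cell l => (c.1:ℕ) ≤ (i:ℕ)),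
          surplus b c := by
    intro i
    rw [← sum_cells_levels_le i (surplus b), Finset.mul_sum]
    apply Finset.sum_congr rfl
    intro q _
    rw [sum_desc_surplus]
    show b ⟨i,q⟩ = 2^(i:ℕ) * (b ⟨i,q⟩ / 2^(i:ℕ))
    field_simp
  have hBle : ∀ i : Fin (l+1), (fun j : Fin (l+1) =>
      ∑ q : Fin (2^(l-(j:ℕ))) × Fin (2^(l-(j:ℕ))), b ⟨j,q⟩) i
      ≤ 2^(i:ℕ) * (b (rootCell l) / 2^l) := by
    intro i
    show ∑ q : Fin (2^(l-(i:ℕ))) × Fin (2^(l-(i:ℕ))), b ⟨i,q⟩ ≤ _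
    rw [hBdef i]
    apply mul_le_mul_of_nonneg_left _ (le_of_lt (hl2 (i:ℕ)))
    rw [← hSy]
    exact Finset.sum_le_sum_of_subset_of_nonneg (Finset.filter_subset _ _) (fun c _ _ => hs c)
  have hBlast : (fun j : Fin (l+1) =>
      ∑ q : Fin (2^(l-(j:ℕ))) × Fin (2^(l-(j:ℕ))), b ⟨j,q⟩) (Fin.last l)
      = 2^l * (b (rootCell l) / 2^l) := by
    show ∑ q : Fin (2^(l-((Fin.last l : Fin (l+1)):ℕ))) × Fin (2^(l-((Fin.last l : Fin (l+1)):ℕ))),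
        b ⟨Fin.last l, q⟩ = _
    have hcongr : ∀ q : Fin (2^(l-((Fin.last l : Fin (l+1)):ℕ)))
        × Fin (2^(l-((Fin.last l : Fin (l+1)):ℕ))),
        (⟨Fin.last l, q⟩ : Cell l) = rootCell l := by
      intro q
      have h1 : (q.1:ℕ) < 1 := by simpa using q.1.2
      have h2 : (q.2:ℕ) < 1 := by simpa using q.2.2
      apply cell_ext
      · simp [rootCell]
      · show (q.1:ℕ) = ((rootCell l).2.1 : ℕ); show (q.1:ℕ) = 0; omega
      · show (q.2:ℕ) = ((rootCell l).2.2 : ℕ); show (q.2:ℕ) = 0; omega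
    rw [Finset.sum_congr rfl (fun q _ => by rw [hcongr q])]
    rw [Finset.sum_const, Finset.card_univ]
    simp only [Fintype.card_prod, Fintype.card_fin, Fin.val_last, Nat.sub_self, pow_zero,
      one_mul, one_smul]
    field_simp
  -- exact value for our y, per level
  have hlevel_y : ∀ i : Fin (l+1),
      ∑ q : Fin (2^(l-(i:ℕ))) × Fin (2^(l-(i:ℕ))), |b ⟨i,q⟩ - pyr y ⟨i,q⟩|
      = 2^(i:ℕ) * (b (rootCell l) / 2^l)
        - ∑ q : Fin (2^(l-(i:ℕ))) × Fin (2^(l-(i:ℕ))), b ⟨i,q⟩ := by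
    intro i
    have habs : ∀ q : Fin (2^(l-(i:ℕ))) × Fin (2^(l-(i:ℕ))),
        |b ⟨i,q⟩ - pyr y ⟨i,q⟩| = pyr y ⟨i,q⟩ - b ⟨i,q⟩ := fun q => by
      rw [abs_of_nonpos (by linarith [hcell ⟨i,q⟩]), neg_sub]
    rw [Finset.sum_congr rfl (fun q _ => habs q), Finset.sum_sub_distrib, hpyr y i, hsumy]
  have hval : l1 (fun c => b c - pyr y c)
      = ∑ i : Fin (l+1), (2^(i:ℕ) * (b (rootCell l)/2^l)
          - ∑ q : Fin (2^(l-(i:ℕ))) × Fin (2^(l-(i:ℕ))), b ⟨i,q⟩) := by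
    rw [hl1]
    exact Finset.sum_congr rfl (fun i _ => hlevel_y i)
  -- l1 of b
  have hl1b : l1 b = ∑ i : Fin (l+1), ∑ q : Fin (2^(l-(i:ℕ))) × Fin (2^(l-(i:ℕ))), b ⟨i,q⟩ := by
    rw [hl1]
    exact Finset.sum_congr rfl (fun i _ => Finset.sum_congr rfl
      (fun q _ => abs_of_nonneg (hb _)))
  -- final arithmetic
  have hgeom2 : ∑ i : Fin (l+1), (2:ℝ)^(i:ℕ) = 2^(l+1) - 1 := by
    rw [Fin.sum_univ_eq_sum_range (fun k => (2:ℝ)^k) (l+1)]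
    rw [geom_sum_eq (by norm_num : (2:ℝ) ≠ 1) (l+1)]
    norm_num
  have hfinal : ∑ i : Fin (l+1), (2^(i:ℕ) * (b (rootCell l)/2^l)
      - ∑ q : Fin (2^(l-(i:ℕ))) × Fin (2^(l-(i:ℕ))), b ⟨i,q⟩)
      = (2 - (2:ℝ)^(-(l:ℤ))) * b (rootCell l) - l1 b := by
    rw [Finset.sum_sub_distrib, ← Finset.sum_mul, hgeom2, hl1b]
    have hz : (2:ℝ)^(-(l:ℤ)) = ((2:ℝ)^l)⁻¹ := by
      rw [zpow_neg, zpow_natCast]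
    rw [hz]
    have h2l : ((2:ℝ)^l) ≠ 0 := ne_of_gt (hl2 l)
    have hc : (2:ℝ)^l * ((2:ℝ)^l)⁻¹ = 1 := mul_inv_cancel₀ h2l
    have key : ((2:ℝ)^(l+1) - 1) * (b (rootCell l) / 2^l)
        = (2 - ((2:ℝ)^l)⁻¹) * b (rootCell l) := by
      rw [div_eq_mul_inv, pow_succ]
      calc ((2:ℝ)^l * 2 - 1) * (b (rootCell l) * ((2:ℝ)^l)⁻¹)
          = ((2:ℝ)^l * ((2:ℝ)^l)⁻¹) * (2 * b (rootCell l)) - ((2:ℝ)^l)⁻¹ * b (rootCell l) := by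
            ring
        _ = (2 - ((2:ℝ)^l)⁻¹) * b (rootCell l) := by rw [hc]; ring
    rw [key]
  constructor
  · intro y'
    rw [hval, hl1]
    have step2 := scalar_lb l (fun j : Fin (l+1) =>
      ∑ q : Fin (2^(l-(j:ℕ))) × Fin (2^(l-(j:ℕ))), b ⟨j,q⟩)
      (b (rootCell l)/2^l) (∑ p, y' p) hBle hBlast
    refine le_trans (le_trans (le_of_eq rfl) step2) ?_
    apply Finset.sum_le_sum
    intro i _
    calc |(∑ q : Fin (2^(l-(i:ℕ))) × Fin (2^(l-(i:ℕ))), b ⟨i,q⟩) - 2^(i:ℕ) * ∑ p, y' p|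
        = |∑ q : Fin (2^(l-(i:ℕ))) × Fin (2^(l-(i:ℕ))), (b ⟨i,q⟩ - pyr y' ⟨i,q⟩)| := by
          rw [Finset.sum_sub_distrib, hpyr y' i]
      _ ≤ _ := Finset.abs_sum_le_sum_abs _ _
  · rw [hval]
    exact hfinal
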